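/- Let H be a complex Hilbert space, (X, ν) a measure space, and φ : X → H a family with ν-measurable coefficient functions satisfying the lower frame condition with bound m > 0: m‖f‖² ≤ ∫_X |⟨φ_x, f⟩|² dν(x) for all f ∈ H. Define the frame operator S with domain Dom(S) = {f ∈ H : there exists h ∈ H such that for every g ∈ H the function x ↦ ⟨g, φ_x⟩⟨φ_x, f⟩ is ν-integrable and ∫_X ⟨g, φ_x⟩⟨φ_x, f⟩ dν(x) = ⟨g, h⟩}, with S f := h. Then S is injective and bounded from below: m‖f‖ ≤ ‖S f‖ for all f ∈ Dom(S); in particular its inverse S⁻¹ : Ran(S) → Dom(S) is bounded with ‖S⁻¹ g‖ ≤ m⁻¹‖g‖. -/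

import Mathlib

open MeasureTheory Filter
open scoped ComplexInnerProductSpace ENNReal

namespace SemiFrames7

variable {X : Type*} [MeasurableSpace X] (ν : Measure X)
  {H : Type*} [NormedAddCommGroup H] [InnerProductSpace ℂ H] [CompleteSpace H]
  (φ : X → H)

/-- `(f, h)` belongs to the graph of the weakly defined frame operator `S`:
`∫ ⟪g, φ x⟫ ⟪φ x, f⟫ dν = ⟪g, h⟫` for every `g ∈ H`, the integrand being integrable. -/
def MemGraphFrameOp (f h : H) : Prop :=
  ∀ g : H, Integrable (fun x => ⟪g, φ x⟫ * ⟪φ x, f⟫) ν ∧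
    ∫ x, ⟪g, φ x⟫ * ⟪φ x, f⟫ ∂ν = ⟪g, h⟫

/-- If `φ` satisfies the lower frame condition with bound `m > 0`, then
the weakly defined frame operator `S` is injective and bounded below by `m`; in particular
its inverse is bounded with bound `m⁻¹`. -/
theorem frame_operator_injective_bounded_below
    {X : Type*} [MeasurableSpace X] (ν : Measure X)
    {H : Type*} [NormedAddCommGroup H] [InnerProductSpace ℂ H] [CompleteSpace H]
    (φ : X → H)
    (hφmeas : ∀ f : H, AEMeasurable (fun x => ⟪φ x, f⟫) ν)
    (m : ℝ) (hm : 0 < m)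
    (hlower : ∀ f : H,
      ENNReal.ofReal (m * ‖f‖ ^ 2) ≤ ∫⁻ x, (‖⟪φ x, f⟫‖₊ : ℝ≥0∞) ^ 2 ∂ν) :
    -- S is injective
    (∀ f f' h : H, MemGraphFrameOp ν φ f h → MemGraphFrameOp ν φ f' h → f = f') ∧
    -- S is bounded from below: m ‖f‖ ≤ ‖S f‖
    (∀ f h : H, MemGraphFrameOp ν φ f h → m * ‖f‖ ≤ ‖h‖) ∧
    -- in particular S⁻¹ : Ran S → Dom S is bounded with ‖S⁻¹ h‖ ≤ m⁻¹ ‖h‖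
    (∀ f h : H, MemGraphFrameOp ν φ f h → ‖f‖ ≤ m⁻¹ * ‖h‖) := by
  have key : ∀ f h : H, MemGraphFrameOp ν φ f h → m * ‖f‖ ≤ ‖h‖ := by
    intro f h hfh
    obtain ⟨hint, heq⟩ := hfh f
    have hfun : ∀ x, ⟪f, φ x⟫ * ⟪φ x, f⟫ = ((‖⟪φ x, f⟫‖ ^ 2 : ℝ) : ℂ) := by
      intro x
      rw [← inner_conj_symm (φ x) f, Complex.mul_conj']
      norm_cast
      simpa using norm_inner_symm (𝕜 := ℂ) f (φ x)
    have hint2 : Integrable (fun x => ‖⟪φ x, f⟫‖ ^ 2) ν := by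
      have := hint
      simp only [hfun] at this
      simpa [← Complex.ofReal_pow] using this.re
    have hintval : ((∫ x, ‖⟪φ x, f⟫‖ ^ 2 ∂ν : ℝ) : ℂ) = ⟪f, h⟫ := by
      rw [← heq]
      simp only [hfun]
      exact integral_ofReal.symm
    have hlin : ∫⁻ x, (‖⟪φ x, f⟫‖₊ : ℝ≥0∞) ^ 2 ∂ν
        = ENNReal.ofReal (∫ x, ‖⟪φ x, f⟫‖ ^ 2 ∂ν) := by
      rw [ofReal_integral_eq_lintegral_ofReal hint2
        (Eventually.of_forall fun x => sq_nonneg _)]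
      congr 1
      ext x
      rw [ENNReal.ofReal_pow (norm_nonneg _), ofReal_norm, enorm_eq_nnnorm]
    have hpos : 0 ≤ ∫ x, ‖⟪φ x, f⟫‖ ^ 2 ∂ν := integral_nonneg fun x => sq_nonneg _
    have h1 : m * ‖f‖ ^ 2 ≤ ∫ x, ‖⟪φ x, f⟫‖ ^ 2 ∂ν := by
      have := hlower f
      rw [hlin] at this
      exact (ENNReal.ofReal_le_ofReal_iff hpos).1 this
    have h2 : ∫ x, ‖⟪φ x, f⟫‖ ^ 2 ∂ν ≤ ‖f‖ * ‖h‖ := by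
      calc ∫ x, ‖⟪φ x, f⟫‖ ^ 2 ∂ν ≤ ‖⟪f, h⟫‖ := by
            rw [← hintval]
            simpa using Complex.abs_re_le_norm ((∫ x, ‖⟪φ x, f⟫‖ ^ 2 ∂ν : ℝ) : ℂ) |>.trans_eq rfl |> fun hh => le_trans (le_abs_self _) hh
        _ ≤ ‖f‖ * ‖h‖ := norm_inner_le_norm f h
    have h3 : m * ‖f‖ ^ 2 ≤ ‖f‖ * ‖h‖ := h1.trans h2
    rcases eq_or_lt_of_le (norm_nonneg f) with hf0 | hf0
    · simp [← hf0]
    · nlinarith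
  refine ⟨?_, key, ?_⟩
  · intro f f' h hf hf'
    have hsub : MemGraphFrameOp ν φ (f - f') 0 := by
      intro g
      obtain ⟨i1, e1⟩ := hf g
      obtain ⟨i2, e2⟩ := hf' g
      constructor
      · simpa only [inner_sub_right, mul_sub, Pi.sub_def] using i1.sub i2
      · simp only [inner_sub_right, mul_sub]
        rw [integral_sub i1 i2, e1, e2]
        simp
    have := key _ _ hsub
    simp only [norm_zero] at this
    have h0 : ‖f - f'‖ ≤ 0 := by nlinarith [norm_nonneg (f - f')]
    have := le_antisymm h0 (norm_nonneg _)
    rwa [norm_eq_zero, sub_eq_zero] at this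
  · intro f h hfh
    have := key f h hfh
    rw [← mul_le_mul_iff_right₀ hm]
    calc m * ‖f‖ ≤ ‖h‖ := this
      _ = m * (m⁻¹ * ‖h‖) := by field_simp

end SemiFrames7
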